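/- Let L be an RPQ over a finite alphabet A and let x, y be distinct variables. The Boolean CRPQ ∃x,y (x →^L y) is bounded if and only if L_ff is finite. -/

import Mathlib

namespace RPQ

/-- The extended alphabet `A^±`: `Sum.inl a` is the letter `a`, `Sum.inr a` is its inverse. -/
abbrev Lett (A : Type) := A ⊕ A

/-- `OPath E u w v` holds iff there is an oriented path from `u` to `v` with label `w`
in the graph database with edge relation `E`. -/
inductive OPath {A V : Type} (E : V → A → V → Prop) : V → List (Lett A) → V → Prop
  | nil (v : V) : OPath E v [] v
  | fwd {u v w : V} {a : A} {l : List (Lett A)} :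
      E u a v → OPath E v l w → OPath E u (Sum.inl a :: l) w
  | bwd {u v w : V} {a : A} {l : List (Lett A)} :
      E v a u → OPath E v l w → OPath E u (Sum.inr a :: l) w

/-- Lift a language over `A` to the extended alphabet `A^±` (forward letters only). -/
def liftLang {A : Type} (L : Language A) : Language (Lett A) :=
  (fun w => w.map Sum.inl) '' L

/-- A language over `A^±` using only forward letters (an RPQ, rather than a 2RPQ). -/
def ForwardLang {A : Type} (L : Language (Lett A)) : Prop :=
  ∀ w ∈ L, ∀ x ∈ w, x.isLeft = true

/-- A conjunctive two-way regular path query with free variables indexed by `ι`. -/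
structure C2RPQ (A ι : Type) where
  Var : Type
  finVar : Finite Var
  free : ι → Var
  Idx : Type
  finIdx : Finite Idx
  src : Idx → Var
  tgt : Idx → Var
  lang : Idx → Language (Lett A)

attribute [instance] C2RPQ.finVar C2RPQ.finIdx

/-- Evaluation of a C2RPQ on a graph database. -/
def C2RPQ.eval {A ι : Type} (γ : C2RPQ A ι) {V : Type} (E : V → A → V → Prop)
    (t : ι → V) : Prop :=
  ∃ h : γ.Var → V, (∀ i, h (γ.free i) = t i) ∧
    ∀ j : γ.Idx, ∃ w ∈ γ.lang j, OPath E (h (γ.src j)) w (h (γ.tgt j))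

/-- A union of C2RPQs. -/
abbrev UC2RPQ (A ι : Type) := List (C2RPQ A ι)

def UC2RPQ.eval {A ι : Type} (Γ : UC2RPQ A ι) {V : Type} (E : V → A → V → Prop)
    (t : ι → V) : Prop :=
  ∃ γ ∈ Γ, γ.eval E t

/-- All languages of `Γ` are regular. -/
def UC2RPQ.Regular {A ι : Type} (Γ : UC2RPQ A ι) : Prop :=
  ∀ γ ∈ Γ, ∀ j : γ.Idx, (γ.lang j).IsRegular

/-- `Γ` is a UCRPQ: all its languages use only forward letters. -/
def UC2RPQ.Forward {A ι : Type} (Γ : UC2RPQ A ι) : Prop :=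
  ∀ γ ∈ Γ, ∀ j : γ.Idx, ForwardLang (γ.lang j)

/-- A conjunctive query: atoms are labelled by single letters, plus equality atoms. -/
structure CQ (A ι : Type) where
  Var : Type
  finVar : Finite Var
  free : ι → Var
  atoms : Set (Var × A × Var)
  eqs : Set (Var × Var)

attribute [instance] CQ.finVar

def CQ.eval {A ι : Type} (φ : CQ A ι) {V : Type} (E : V → A → V → Prop)
    (t : ι → V) : Prop :=
  ∃ h : φ.Var → V, (∀ i, h (φ.free i) = t i) ∧
    (∀ x a y, (x, a, y) ∈ φ.atoms → E (h x) a (h y)) ∧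
    (∀ x y, (x, y) ∈ φ.eqs → h x = h y)

/-- A union of conjunctive queries. -/
abbrev UCQ (A ι : Type) := List (CQ A ι)

def UCQ.eval {A ι : Type} (Φ : UCQ A ι) {V : Type} (E : V → A → V → Prop)
    (t : ι → V) : Prop :=
  ∃ φ ∈ Φ, φ.eval E t

/-- `Γ` and `Φ` agree on every (finite) graph database. -/
def EquivUCQ {A ι : Type} (Γ : UC2RPQ A ι) (Φ : UCQ A ι) : Prop :=
  ∀ (V : Type) [Fintype V] (E : V → A → V → Prop) (t : ι → V),
    UC2RPQ.eval Γ E t ↔ UCQ.eval Φ E t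

/-- A UC2RPQ is bounded if it is equivalent to some UCQ. -/
def UC2RPQ.Bounded {A ι : Type} (Γ : UC2RPQ A ι) : Prop :=
  ∃ Φ : UCQ A ι, EquivUCQ Γ Φ

/-- Containment of UC2RPQs. -/
def UC2RPQ.Contained {A ι : Type} (Γ Γ' : UC2RPQ A ι) : Prop :=
  ∀ (V : Type) [Fintype V] (E : V → A → V → Prop) (t : ι → V),
    UC2RPQ.eval Γ E t → UC2RPQ.eval Γ' E t

/-- Equivalence relation on variables generated by the equality atoms. -/
def CQ.eqv {A ι : Type} (φ : CQ A ι) : φ.Var → φ.Var → Prop :=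
  Relation.EqvGen fun x y => (x, y) ∈ φ.eqs

/-- Homomorphism between CQs (fixing the free variables pointwise). -/
def CQHom {A ι : Type} (φ ψ : CQ A ι) : Prop :=
  ∃ h : φ.Var → ψ.Var,
    (∀ i, h (φ.free i) = ψ.free i) ∧
    (∀ x y, φ.eqv x y → ψ.eqv (h x) (h y)) ∧
    ∀ x a y, (x, a, y) ∈ φ.atoms →
      ∃ x' y', (x', a, y') ∈ ψ.atoms ∧ ψ.eqv (h x) x' ∧ ψ.eqv (h y) y'

/-- An expansion of a UC2RPQ `Γ`: a disjunct together with a chosen word for each atom. -/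
structure Expansion {A ι : Type} (Γ : UC2RPQ A ι) where
  γ : C2RPQ A ι
  mem : γ ∈ Γ
  word : ∀ j : γ.Idx, List (Lett A)
  word_mem : ∀ j, word j ∈ γ.lang j

namespace Expansion

variable {A ι : Type} {Γ : UC2RPQ A ι}

/-- Variables of the expansion: variables of the disjunct, plus fresh intermediate
variables for each chosen word (a word of length `k` contributes `k - 1` of them). -/
abbrev EVar (e : Expansion Γ) : Type :=
  e.γ.Var ⊕ (Σ j : e.γ.Idx, Fin ((e.word j).length - 1))

/-- The `p`-th vertex on the fresh oriented path expanding atom `j`. -/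
def node (e : Expansion Γ) (j : e.γ.Idx) (p : ℕ) : e.EVar :=
  if hp : p = 0 then Sum.inl (e.γ.src j)
  else if h : p < (e.word j).length then Sum.inr ⟨j, ⟨p - 1, by omega⟩⟩
  else Sum.inl (e.γ.tgt j)

/-- The CQ associated with an expansion. -/
def cq (e : Expansion Γ) : CQ A ι where
  Var := e.EVar
  finVar := inferInstance
  free := fun i => Sum.inl (e.γ.free i)
  atoms := {t | ∃ (j : e.γ.Idx) (p : ℕ) (a : A),
    ((e.word j)[p]? = some (Sum.inl a) ∧ t = (e.node j p, a, e.node j (p + 1))) ∨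
    ((e.word j)[p]? = some (Sum.inr a) ∧ t = (e.node j (p + 1), a, e.node j p))}
  eqs := {t | ∃ j : e.γ.Idx, e.word j = [] ∧
    t = (Sum.inl (e.γ.src j), Sum.inl (e.γ.tgt j))}

/-- The size `‖λ‖` of an expansion: its number of non-equality atoms. -/
noncomputable def size (e : Expansion Γ) : ℕ := e.cq.atoms.ncard

/-- An expansion is minimal if no expansion of strictly smaller size maps into it. -/
def Minimal (e : Expansion Γ) : Prop :=
  ¬ ∃ e' : Expansion Γ, CQHom e'.cq e.cq ∧ e'.size < e.size

end Expansion


/-- The factor-free sublanguage of `L`: words of `L` with no proper factor in `L`. -/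
def Lff {A : Type} (L : Language A) : Language A :=
  {w | w ∈ L ∧ ¬ ∃ v, v ∈ L ∧ v <:+: w ∧ v ≠ w}

/-- The Boolean query `∃ x y (x →^L y)` (no free variables). -/
def boolAtomQ (A : Type) (L : Language A) : C2RPQ A Empty where
  Var := Fin 2
  finVar := inferInstance
  free := Empty.elim
  Idx := Unit
  finIdx := inferInstance
  src := fun _ => 0
  tgt := fun _ => 1
  lang := fun _ => liftLang L

section AuxPaths

variable {A V : Type} {E : V → A → V → Prop}

theorem opath_split {u v : V} {l1 l2 : List (Lett A)}
    (h : OPath E u (l1 ++ l2) v) : ∃ m, OPath E u l1 m ∧ OPath E m l2 v := by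
  induction l1 generalizing u with
  | nil => exact ⟨u, .nil u, h⟩
  | cons x l ih =>
    cases h with
    | fwd e h' => obtain ⟨m, hm1, hm2⟩ := ih h'; exact ⟨m, .fwd e hm1, hm2⟩
    | bwd e h' => obtain ⟨m, hm1, hm2⟩ := ih h'; exact ⟨m, .bwd e hm1, hm2⟩

theorem opath_mono {E' : V → A → V → Prop}
    (hE : ∀ u a v, E u a v → E' u a v) {u v : V} {l : List (Lett A)}
    (hp : OPath E u l v) : OPath E' u l v := by
  induction hp with
  | nil => exact .nil _
  | fwd e _ ih => exact .fwd (hE _ _ _ e) ih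
  | bwd e _ ih => exact .bwd (hE _ _ _ e) ih

theorem opath_of_chain : ∀ (w : List A) (g : ℕ → V),
    (∀ p (hp : p < w.length), E (g p) (w[p]'hp) (g (p + 1))) →
    OPath E (g 0) (w.map Sum.inl) (g w.length) := by
  intro w
  induction w with
  | nil => exact fun g _ => .nil _
  | cons a w ih =>
    intro g hg
    refine .fwd (hg 0 (by simp)) ?_
    have h2 := ih (fun p => g (p + 1)) (fun p hp => by
      exact hg (p + 1) (by simpa using hp))
    simpa using h2

theorem chain_of_opath : ∀ (w : List A) {u v : V}, OPath E u (w.map Sum.inl) v →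
    ∃ g : ℕ → V, g 0 = u ∧ g w.length = v ∧
      ∀ p (hp : p < w.length), E (g p) (w[p]'hp) (g (p + 1)) := by
  intro w
  induction w with
  | nil =>
    intro u v h
    cases h
    exact ⟨fun _ => u, rfl, rfl, fun p hp => absurd hp (by simp)⟩
  | cons a w ih =>
    intro u v h
    cases h with
    | fwd e h' =>
      obtain ⟨g, hg0, hgl, hge⟩ := ih h'
      refine ⟨fun p => if p = 0 then u else g (p - 1), by simp, by simpa using hgl, ?_⟩
      intro p hp
      match p with
      | 0 => simpa [hg0] using e
      | q + 1 => simpa using hge q (by simpa using hp)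

end AuxPaths

theorem exists_ff_factor {A : Type} {L : Language A} :
    ∀ (n : ℕ) (w : List A), w.length = n → w ∈ L → ∃ v, v ∈ Lff L ∧ v <:+: w := by
  intro n
  induction n using Nat.strong_induction_on with
  | _ n ih =>
    intro w hlen hwL
    subst hlen
    by_cases h : w ∈ Lff L
    · exact ⟨w, h, List.infix_refl w⟩
    · have hex : ∃ v, v ∈ L ∧ v <:+: w ∧ v ≠ w := by
        by_contra hc
        exact h ⟨hwL, hc⟩
      obtain ⟨v, hvL, hvw, hne⟩ := hex
      have hlt : v.length < w.length :=
        lt_of_le_of_ne hvw.length_le (fun hl => hne (hvw.eq_of_length hl))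
      obtain ⟨v', h1, h2⟩ := ih v.length hlt v rfl hvL
      exact ⟨v', h1, h2.trans hvw⟩

/-- The path CQ for the word `w`. -/
def pathCQ {A : Type} (w : List A) : CQ A Empty where
  Var := Fin (w.length + 1)
  finVar := inferInstance
  free := fun i => i.elim
  atoms := {t | ∃ (p : ℕ) (hp : p < w.length),
    t = (⟨p, by omega⟩, w[p]'hp, ⟨p + 1, by omega⟩)}
  eqs := ∅

theorem pathCQ_eval_iff {A : Type} (w : List A) {V : Type} (E : V → A → V → Prop)
    (t : Empty → V) :
    (pathCQ w).eval E t ↔ ∃ u v, OPath E u (w.map Sum.inl) v := by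
  constructor
  · rintro ⟨h, -, hat, -⟩
    have hle : ∀ p : ℕ, min p w.length < w.length + 1 := fun p => by omega
    set g : ℕ → V := fun p => h ⟨min p w.length, hle p⟩ with hgdef
    refine ⟨g 0, g w.length, opath_of_chain (E := E) w g (fun p hp => ?_)⟩
    have h1 : (⟨min p w.length, hle p⟩ : Fin (w.length + 1)) = ⟨p, by omega⟩ := by
      simp [Nat.min_eq_left (by omega : p ≤ w.length)]
    have h2 : (⟨min (p+1) w.length, hle (p+1)⟩ : Fin (w.length + 1)) = ⟨p + 1, by omega⟩ := by
      simp [Nat.min_eq_left (by omega : p + 1 ≤ w.length)]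
    have := hat ⟨p, by omega⟩ (w[p]'hp) ⟨p + 1, by omega⟩ ⟨p, hp, rfl⟩
    simpa [hgdef, h1, h2] using this
  · rintro ⟨u, v, hp⟩
    obtain ⟨g, hg0, hgl, hge⟩ := chain_of_opath w hp
    refine ⟨fun i : Fin (w.length + 1) => g i.val, fun i => i.elim, ?_, fun _ _ hxy => False.elim hxy⟩
    rintro x a y ⟨p, hlt, heq⟩
    have heq : ((x, a, y) : Fin (w.length + 1) × A × Fin (w.length + 1)) = _ := heq
    rw [Prod.ext_iff] at heq
    obtain ⟨hx, heq⟩ := heq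
    rw [Prod.ext_iff] at heq
    obtain ⟨ha, hy⟩ := heq
    subst hx ha hy
    exact hge p hlt

theorem gamma_eval_iff {A : Type} (L : Language A) {V : Type} (E : V → A → V → Prop)
    (t : Empty → V) :
    UC2RPQ.eval [boolAtomQ A L] E t ↔
      ∃ (u v : V) (w : List A), w ∈ L ∧ OPath E u (w.map Sum.inl) v := by
  constructor
  · rintro ⟨γ, hγ, h, -, hw⟩
    rw [List.mem_singleton] at hγ
    subst hγ
    obtain ⟨w', ⟨w, hwL, rfl⟩, hp⟩ := hw ()
    exact ⟨_, _, w, hwL, hp⟩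
  · rintro ⟨u, v, w, hwL, hp⟩
    refine ⟨boolAtomQ A L, by simp, fun i : Fin 2 => if i = 0 then u else v, fun i => i.elim, ?_⟩
    intro j
    exact ⟨w.map Sum.inl, ⟨w, hwL, rfl⟩, by simpa [boolAtomQ] using hp⟩

/-- The Boolean CRPQ `∃x,y (x →^L y)` is bounded iff `L_ff` is finite. -/
theorem bool_rpq_bounded_iff_ff_finite {A : Type} [Fintype A] (L : Language A)
    (hreg : L.IsRegular) :
    UC2RPQ.Bounded [boolAtomQ A L] ↔ (Lff L).Finite := by
  constructor
  · rintro ⟨Φ, hΦ⟩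
    by_contra hinf
    have hinf : (Lff L : Set (List A)).Infinite := hinf
    obtain ⟨w, hw, hlen⟩ :
        ∃ w ∈ Lff L, (Φ.map fun φ => Nat.card φ.Var).sum + 1 ≤ w.length := by
      by_contra hc
      push_neg at hc
      refine hinf (Set.Finite.subset
        (List.finite_length_lt A ((Φ.map fun φ => Nat.card φ.Var).sum + 1)) ?_)
      intro x hx
      exact hc x hx
    -- the line graph of `w`
    set E' : Fin (w.length + 1) → A → Fin (w.length + 1) → Prop :=
      fun i a j => ∃ hi : (i : ℕ) < w.length, a = w[(i : ℕ)]'hi ∧ (j : ℕ) = (i : ℕ) + 1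
      with hE'
    have hle : ∀ p : ℕ, min p w.length < w.length + 1 := fun p => by omega
    have hΓ : UC2RPQ.eval [boolAtomQ A L] E' (fun e : Empty => e.elim) := by
      rw [gamma_eval_iff]
      refine ⟨_, _, w, hw.1,
        opath_of_chain (E := E') w (fun p => ⟨min p w.length, hle p⟩) ?_⟩
      intro p hp
      have e1 : min p w.length = p := by omega
      have e2 : min (p + 1) w.length = p + 1 := by omega
      show ∃ hi : min p w.length < w.length,
        (w[p]'hp) = w[min p w.length]'hi ∧ min (p + 1) w.length = min p w.length + 1
      simp only [e1, e2]
      exact ⟨hp, by simp⟩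
    obtain ⟨φ, hφΦ, h, hfree, hatoms, heqs⟩ :=
      (hΦ (Fin (w.length + 1)) E' (fun e : Empty => e.elim)).mp hΓ
    -- the image database
    set E'' : Fin (w.length + 1) → A → Fin (w.length + 1) → Prop :=
      fun u a v => ∃ x y, (x, a, y) ∈ φ.atoms ∧ h x = u ∧ h y = v with hE''
    have hΦ2 : UCQ.eval Φ E'' (fun e : Empty => e.elim) :=
      ⟨φ, hφΦ, h, hfree, fun x a y hxy => ⟨x, y, hxy, rfl, rfl⟩, heqs⟩
    have hΓ2 := (hΦ (Fin (w.length + 1)) E'' (fun e : Empty => e.elim)).mpr hΦ2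
    rw [gamma_eval_iff] at hΓ2
    obtain ⟨u, v, w', hw'L, hp2⟩ := hΓ2
    obtain ⟨g, hg0, hgk, hge⟩ := chain_of_opath w' hp2
    have hmono : ∀ p (hp : p < w'.length), E' (g p) (w'[p]'hp) (g (p + 1)) := by
      intro p hp
      obtain ⟨x, y, hxy, hx, hy⟩ := hge p hp
      exact hx ▸ hy ▸ hatoms x _ y hxy
    have hcoe : ∀ p, p ≤ w'.length → (g p : ℕ) = (g 0 : ℕ) + p := by
      intro p
      induction p with
      | zero => simp
      | succ q ih =>
        intro hq
        obtain ⟨hi, -, hj⟩ := hmono q (by omega)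
        rw [hj, ih (by omega)]
        omega
    have hbnd : ∀ p, p < w'.length → (g 0 : ℕ) + p < w.length := by
      intro p hp
      obtain ⟨hi, -, -⟩ := hmono p hp
      rw [hcoe p (by omega)] at hi
      exact hi
    have hinfix : w' <:+: w := by
      rcases Nat.eq_zero_or_pos w'.length with h0 | h0
      · rw [List.length_eq_zero_iff] at h0
        rw [h0]
        exact List.nil_infix
      · have hfit : (g 0 : ℕ) + w'.length ≤ w.length := by
          have := hbnd (w'.length - 1) (by omega)
          omega
        have hweq : w' = (w.drop (g 0)).take w'.length := by
          refine List.ext_getElem (by simp; omega) ?_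
          intro p hp1 hp2
          obtain ⟨hi, ha, -⟩ := hmono p hp1
          rw [ha]
          have : (g p : ℕ) = (g 0 : ℕ) + p := hcoe p (by omega)
          simp only [List.getElem_take, List.getElem_drop]
          try congr 1
          try omega
        rw [hweq]
        exact ((w.drop (g 0)).take_prefix w'.length).isInfix.trans
          ((w.drop_suffix (g 0)).isInfix)
    have hww : w' = w := by
      by_contra hne
      exact hw.2 ⟨w', hw'L, hinfix, hne⟩
    subst hww
    -- extract injectively many variables
    have hpick : ∀ p : Fin w'.length, ∃ x : φ.Var, h x = g p := by
      intro p
      obtain ⟨x, y, -, hx, -⟩ := hge p p.isLt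
      exact ⟨x, hx⟩
    choose f hf using hpick
    have hfinj : Function.Injective f := by
      intro p q hpq
      have : g p = g q := by rw [← hf p, ← hf q, hpq]
      have hcp := hcoe p (by omega)
      have hcq := hcoe q (by omega)
      have : (g (p : ℕ) : ℕ) = (g (q : ℕ) : ℕ) := by rw [this]
      apply Fin.ext
      omega
    have hcard : w'.length ≤ Nat.card φ.Var := by
      have := Nat.card_le_card_of_injective f hfinj
      simpa using this
    have hmem : Nat.card φ.Var ≤ (Φ.map fun φ => Nat.card φ.Var).sum :=
      List.single_le_sum (by simp) _ (List.mem_map_of_mem hφΦ)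
    omega
  · intro hfin
    refine ⟨hfin.toFinset.toList.map pathCQ, ?_⟩
    intro V _ E t
    rw [gamma_eval_iff]
    constructor
    · rintro ⟨u, v, w, hwL, hp⟩
      obtain ⟨f, hf, hinf⟩ := exists_ff_factor w.length w rfl hwL
      obtain ⟨s, t2, rfl⟩ := hinf
      rw [List.map_append, List.map_append] at hp
      obtain ⟨m, hp1, -⟩ := opath_split hp
      obtain ⟨m2, -, hp3⟩ := opath_split hp1
      refine ⟨pathCQ f, List.mem_map_of_mem ?_,
        (pathCQ_eval_iff f E t).mpr ⟨m2, m, hp3⟩⟩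
      rw [Finset.mem_toList, hfin.mem_toFinset]
      exact hf
    · rintro ⟨φ, hφ, he⟩
      rw [List.mem_map] at hφ
      obtain ⟨f, hf, rfl⟩ := hφ
      rw [Finset.mem_toList, hfin.mem_toFinset] at hf
      obtain ⟨u, v, hp⟩ := (pathCQ_eval_iff f E t).mp he
      exact ⟨u, v, f, hf.1, hp⟩

end RPQ
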